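/- Let $p_1 < p_2 < p_3$ be distinct primes and $n_1, n_2, n_3$ positive integers. Then $\sum_{i=1}^3 \frac{p_i^{n_i+1}-p_i}{p_i-1} \le \frac{1}{2}\prod_{i=1}^3 p_i^{n_i}$. -/
import Mathlib

lemma aux_term (p : ℚ) (n : ℕ) (hp : 2 ≤ p) :
    (p ^ (n + 1) - p) / (p - 1) ≤ 2 * (p ^ n - 1) := by
  have hp1 : (0:ℚ) < p - 1 := by linarith
  rw [div_le_iff₀ hp1]
  have hpow : (1:ℚ) ≤ p ^ n := one_le_pow₀ (by linarith)
  have : p ^ (n + 1) = p ^ n * p := pow_succ p n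
  nlinarith [mul_nonneg (sub_nonneg.2 hpow) (sub_nonneg.2 hp)]

lemma aux_pow (p : ℚ) (n : ℕ) (hn : 0 < n) (hp : 1 ≤ p) : p ≤ p ^ n := by
  calc p = p ^ 1 := (pow_one p).symm
  _ ≤ p ^ n := pow_le_pow_right₀ hp hn

theorem stmt_0 (p₁ p₂ p₃ : ℕ) (n₁ n₂ n₃ : ℕ)
    (hp₁ : p₁.Prime) (hp₂ : p₂.Prime) (hp₃ : p₃.Prime)
    (h12 : p₁ < p₂) (h23 : p₂ < p₃)
    (hn₁ : 0 < n₁) (hn₂ : 0 < n₂) (hn₃ : 0 < n₃) :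
    ((p₁ : ℚ) ^ (n₁ + 1) - p₁) / ((p₁ : ℚ) - 1)
      + ((p₂ : ℚ) ^ (n₂ + 1) - p₂) / ((p₂ : ℚ) - 1)
      + ((p₃ : ℚ) ^ (n₃ + 1) - p₃) / ((p₃ : ℚ) - 1)
      ≤ (1 / 2 : ℚ) * ((p₁ : ℚ) ^ n₁ * (p₂ : ℚ) ^ n₂ * (p₃ : ℚ) ^ n₃) := by
  have h1 : (2:ℚ) ≤ p₁ := by exact_mod_cast hp₁.two_le
  have h2n : 3 ≤ p₂ := lt_of_le_of_lt hp₁.two_le h12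
  have h2 : (3:ℚ) ≤ p₂ := by exact_mod_cast h2n
  have h3n : 5 ≤ p₃ := by
    have h4 : p₃ ≠ 4 := by rintro rfl; norm_num at hp₃
    omega
  have h3 : (5:ℚ) ≤ p₃ := by exact_mod_cast h3n
  have ha : (2:ℚ) ≤ (p₁:ℚ) ^ n₁ := le_trans h1 (aux_pow _ _ hn₁ (by linarith))
  have hb : (3:ℚ) ≤ (p₂:ℚ) ^ n₂ := le_trans h2 (aux_pow _ _ hn₂ (by linarith))
  have hc : (5:ℚ) ≤ (p₃:ℚ) ^ n₃ := le_trans h3 (aux_pow _ _ hn₃ (by linarith))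
  have t1 := aux_term (p₁:ℚ) n₁ h1
  have t2 := aux_term (p₂:ℚ) n₂ (by linarith)
  have t3 := aux_term (p₃:ℚ) n₃ (by linarith)
  nlinarith [mul_le_mul hb hc (by linarith) (by linarith),
    mul_le_mul ha (mul_le_mul hb hc (by linarith) (by linarith)) (by linarith) (by linarith)]
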